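/- (Mahler's compound volume estimate) For each n and 1 ≤ p ≤ n−1 there are constants c_1(n,p), c_2(n,p) > 0 such that for every symmetric convex body C in ℝ^n, the p-th compound C_p (the convex hull in ℝ^N, N = C(n,p), of all x_1∧⋯∧x_p with x_i ∈ C) satisfies c_1(n,p) ≤ V(C_p)·V(C)^{−P} ≤ c_2(n,p), where P = C(n−1,p−1). -/

import Mathlib

open Pointwise MeasureTheory

/-- Index set for coordinates of the `p`-th exterior power of `ℝⁿ`. -/
abbrev WedgeIdx (n p : ℕ) := {s : Finset (Fin n) // s.card = p}

/-- The exterior product `x₁ ∧ ⋯ ∧ x_p` in Plücker coordinates. -/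
noncomputable def wedge (n p : ℕ) (v : Fin p → Fin n → ℝ) : WedgeIdx n p → ℝ :=
  fun s => Matrix.det (Matrix.of fun i j => v i ((s.1.orderIsoOfFin s.2 j : Fin n)))

/-- The `p`-th compound body `C_p`: the convex hull of all exterior products of
`p` points of `C`. -/
noncomputable def compoundBody (n p : ℕ) (C : Set (Fin n → ℝ)) : Set (WedgeIdx n p → ℝ) :=
  convexHull ℝ {w : WedgeIdx n p → ℝ | ∃ v : Fin p → Fin n → ℝ,
    (∀ i, v i ∈ C) ∧ w = wedge n p v}

namespace Mahler

variable {n p : ℕ}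

/-- The increasing enumeration of a `p`-subset of `Fin n`. -/
noncomputable def embOf (s : WedgeIdx n p) : Fin p → Fin n :=
  fun j => (s.1.orderIsoOfFin s.2 j : Fin n)

lemma embOf_injective (s : WedgeIdx n p) : Function.Injective (embOf s) := by
  intro a b h
  have := (s.1.orderIsoOfFin s.2).injective (Subtype.ext h)
  exact this

lemma embOf_mem (s : WedgeIdx n p) (j : Fin p) : embOf s j ∈ s.1 :=
  (s.1.orderIsoOfFin s.2 j).2

lemma image_embOf (s : WedgeIdx n p) : Finset.image (embOf s) Finset.univ = s.1 := by
  apply Finset.eq_of_subset_of_card_le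
  · intro a ha
    simp only [Finset.mem_image] at ha
    obtain ⟨j, _, rfl⟩ := ha
    exact embOf_mem s j
  · rw [Finset.card_image_of_injective _ (embOf_injective s), Finset.card_univ,
      Fintype.card_fin, s.2]

lemma det_row_expansion {m : Type*} [DecidableEq m] [Fintype m] (M : Matrix m m ℝ) :
    M.det = ∑ σ : Equiv.Perm m, ((Equiv.Perm.sign σ : ℤ) : ℝ) * ∏ i, M i (σ i) := by
  rw [← Matrix.det_transpose, Matrix.det_apply']
  rfl

theorem cauchy_binet (A : Matrix (Fin p) (Fin n) ℝ) (B : Matrix (Fin n) (Fin p) ℝ) :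
    (A * B).det = ∑ s : WedgeIdx n p,
      (A.submatrix id (embOf s)).det * (B.submatrix (embOf s) id).det := by
  classical
  have step1 : (A * B).det = ∑ f : Fin p → Fin n,
      (∏ i, A i (f i)) * (Matrix.of fun i j => B (f i) j).det := by
    rw [det_row_expansion]
    have : ∀ σ : Equiv.Perm (Fin p), (∏ i, (A * B) i (σ i)) =
        ∑ f : Fin p → Fin n, ∏ i, (A i (f i) * B (f i) (σ i)) := by
      intro σ
      simp only [Matrix.mul_apply]
      rw [Finset.prod_univ_sum]
      rw [Fintype.piFinset_univ]
    simp only [this, Finset.mul_sum]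
    rw [Finset.sum_comm]
    congr 1
    ext f
    rw [det_row_expansion, Finset.mul_sum]
    congr 1
    ext σ
    rw [Finset.prod_mul_distrib]
    simp only [Matrix.of_apply]
    ring
  rw [step1]
  rw [← Finset.sum_filter_add_sum_filter_not Finset.univ (fun f => Function.Injective f)]
  have hnon : ∑ f ∈ Finset.univ.filter (fun f => ¬ Function.Injective f),
      (∏ i, A i (f i)) * (Matrix.of fun i j => B (f i) j).det = 0 := by
    apply Finset.sum_eq_zero
    intro f hf
    rw [Finset.mem_filter] at hf
    simp only [Function.Injective] at hf
    push_neg at hf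
    obtain ⟨i, j, hfij, hij⟩ := hf.2
    have : (Matrix.of fun i j => B (f i) j).det = 0 := by
      apply Matrix.det_zero_of_row_eq hij
      ext k
      simp [hfij]
    rw [this, mul_zero]
  rw [hnon, add_zero]
  have key : ∑ f ∈ Finset.univ.filter (fun f : Fin p → Fin n => Function.Injective f),
      (∏ i, A i (f i)) * (Matrix.of fun i j => B (f i) j).det
      = ∑ q : WedgeIdx n p × Equiv.Perm (Fin p),
        (∏ i, A i (embOf q.1 (q.2 i))) * (Matrix.of fun i j => B (embOf q.1 (q.2 i)) j).det := by
    refine (Finset.sum_bij (i := fun (q : WedgeIdx n p × Equiv.Perm (Fin p)) _ =>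
      fun i => embOf q.1 (q.2 i)) ?_ ?_ ?_ ?_).symm
    · intro q _
      simp only [Finset.mem_filter, Finset.mem_univ, true_and]
      exact (embOf_injective q.1).comp q.2.injective
    · rintro ⟨s, σ⟩ _ ⟨s', σ'⟩ _ h
      simp only at h
      have h' : ∀ i, embOf s (σ i) = embOf s' (σ' i) := fun i => congrFun h i
      have hs : s = s' := by
        apply Subtype.ext
        rw [← image_embOf s, ← image_embOf s']
        ext a
        simp only [Finset.mem_image, Finset.mem_univ, true_and]
        constructor
        · rintro ⟨j, rfl⟩
          exact ⟨σ' (σ.symm j), by rw [← h' (σ.symm j), Equiv.apply_symm_apply]⟩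
        · rintro ⟨j, rfl⟩
          exact ⟨σ (σ'.symm j), by rw [h' (σ'.symm j), Equiv.apply_symm_apply]⟩
      subst hs
      have hσ : σ = σ' := Equiv.ext fun i => embOf_injective s (h' i)
      rw [hσ]
    · intro f hf
      simp only [Finset.mem_filter, Finset.mem_univ, true_and] at hf
      have hcard : (Finset.univ.image f).card = p := by
        rw [Finset.card_image_of_injective _ hf, Finset.card_univ, Fintype.card_fin]
      set s : WedgeIdx n p := ⟨Finset.univ.image f, hcard⟩ with hsdef
      have hmem : ∀ i, f i ∈ s.1 := fun i => Finset.mem_image_of_mem f (Finset.mem_univ i)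
      have hginj : Function.Injective
          (fun i => (s.1.orderIsoOfFin s.2).symm ⟨f i, hmem i⟩) := by
        intro a b hab
        apply hf
        have h2 := congrArg (fun x => ((s.1.orderIsoOfFin s.2) x : Fin n)) hab
        simpa using h2
      refine ⟨⟨s, Equiv.ofBijective _ (Finite.injective_iff_bijective.mp hginj)⟩,
        Finset.mem_univ _, ?_⟩
      funext i
      show embOf s ((s.1.orderIsoOfFin s.2).symm ⟨f i, hmem i⟩) = f i
      simp [embOf]
    · intro q _
      rfl
  rw [key, Fintype.sum_prod_type]
  congr 1
  ext s
  have hperm : ∀ σ : Equiv.Perm (Fin p),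
      (Matrix.of fun i j => B (embOf s (σ i)) j).det =
        ((Equiv.Perm.sign σ : ℤ) : ℝ) * (B.submatrix (embOf s) id).det := by
    intro σ
    have : (Matrix.of fun i j => B (embOf s (σ i)) j) =
        (B.submatrix (embOf s) id).submatrix σ id := by
      ext i j; rfl
    rw [this, Matrix.det_permute]
  simp only [hperm]
  rw [det_row_expansion (A.submatrix id (embOf s)), Finset.sum_mul]
  congr 1
  ext σ
  simp only [Matrix.submatrix_apply, id_eq]
  ring

/-- The `p`-th compound matrix. -/
noncomputable def cmp (T : Matrix (Fin n) (Fin n) ℝ) : Matrix (WedgeIdx n p) (WedgeIdx n p) ℝ :=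
  Matrix.of fun s t => (T.submatrix (embOf s) (embOf t)).det

lemma cmp_apply (T : Matrix (Fin n) (Fin n) ℝ) (s t : WedgeIdx n p) :
    cmp T s t = (T.submatrix (embOf s) (embOf t)).det := rfl

lemma cmp_mul (S T : Matrix (Fin n) (Fin n) ℝ) :
    cmp (p := p) (S * T) = cmp S * cmp T := by
  ext s t
  have h1 : (S * T).submatrix (embOf s) (embOf t)
      = (S.submatrix (embOf s) id) * (T.submatrix id (embOf t)) := by
    ext a b
    simp [Matrix.mul_apply]
  rw [cmp_apply, h1, cauchy_binet, Matrix.mul_apply]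
  apply Finset.sum_congr rfl
  intro u _
  rw [Matrix.submatrix_submatrix, Matrix.submatrix_submatrix]
  simp [cmp_apply, Function.comp]

lemma exists_mem_not_mem {s t : WedgeIdx n p} (h : s ≠ t) : ∃ a, a ∈ s.1 ∧ a ∉ t.1 := by
  by_contra hc
  push_neg at hc
  exact h (Subtype.ext (Finset.eq_of_subset_of_card_le hc (le_of_eq (t.2.trans s.2.symm))))

lemma det_submatrix_eq_zero_row {T : Matrix (Fin n) (Fin n) ℝ} {s t : WedgeIdx n p} {a : Fin n}
    (has : a ∈ s.1) (h0 : ∀ y ∈ t.1, T a y = 0) :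
    (T.submatrix (embOf s) (embOf t)).det = 0 := by
  apply Matrix.det_eq_zero_of_row_eq_zero ((s.1.orderIsoOfFin s.2).symm ⟨a, has⟩)
  intro k
  have ha : embOf s ((s.1.orderIsoOfFin s.2).symm ⟨a, has⟩) = a := by
    simp [embOf]
  rw [Matrix.submatrix_apply, ha]
  exact h0 _ (embOf_mem t k)

lemma det_submatrix_eq_zero_col {T : Matrix (Fin n) (Fin n) ℝ} {s t : WedgeIdx n p} {b : Fin n}
    (hbt : b ∈ t.1) (h0 : ∀ x ∈ s.1, T x b = 0) :
    (T.submatrix (embOf s) (embOf t)).det = 0 := by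
  apply Matrix.det_eq_zero_of_column_eq_zero ((t.1.orderIsoOfFin t.2).symm ⟨b, hbt⟩)
  intro k
  have hb : embOf t ((t.1.orderIsoOfFin t.2).symm ⟨b, hbt⟩) = b := by
    simp [embOf]
  rw [Matrix.submatrix_apply, hb]
  exact h0 _ (embOf_mem s k)

lemma cmp_one : cmp (p := p) (1 : Matrix (Fin n) (Fin n) ℝ) = 1 := by
  ext s t
  by_cases h : s = t
  · subst h
    rw [cmp_apply]
    have h1 : (1 : Matrix (Fin n) (Fin n) ℝ).submatrix (embOf s) (embOf s) = 1 := by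
      ext a b
      by_cases hab : a = b
      · subst hab; simp
      · rw [Matrix.submatrix_apply, Matrix.one_apply_ne, Matrix.one_apply_ne hab]
        exact fun hc => hab (embOf_injective s hc)
    rw [h1, Matrix.det_one, Matrix.one_apply_eq]
  · rw [cmp_apply, Matrix.one_apply_ne h]
    obtain ⟨a, has, hat⟩ := exists_mem_not_mem h
    exact det_submatrix_eq_zero_row has fun y hy =>
      Matrix.one_apply_ne fun hc => hat (hc ▸ hy)

lemma cmp_diagonal (d : Fin n → ℝ) :
    cmp (p := p) (Matrix.diagonal d)
      = Matrix.diagonal (fun s : WedgeIdx n p => ∏ i ∈ s.1, d i) := by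
  ext s t
  by_cases h : s = t
  · subst h
    rw [cmp_apply, Matrix.diagonal_apply_eq]
    have h1 : (Matrix.diagonal d).submatrix (embOf s) (embOf s)
        = Matrix.diagonal (fun j => d (embOf s j)) := by
      ext a b
      by_cases hab : a = b
      · subst hab; simp
      · rw [Matrix.submatrix_apply, Matrix.diagonal_apply_ne _ hab,
          Matrix.diagonal_apply_ne]
        exact fun hc => hab (embOf_injective s hc)
    rw [h1, Matrix.det_diagonal, ← image_embOf s,
      Finset.prod_image (fun x _ y _ hxy => embOf_injective s hxy)]
  · rw [cmp_apply, Matrix.diagonal_apply_ne _ h]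
    obtain ⟨a, has, hat⟩ := exists_mem_not_mem h
    exact det_submatrix_eq_zero_row has fun y hy =>
      Matrix.diagonal_apply_ne _ fun hc => hat (hc ▸ hy)

lemma det_eq_one_of_increasing {ι : Type*} [Fintype ι] [DecidableEq ι]
    (M : Matrix ι ι ℝ) (b : ι → ℤ) (hd : ∀ i, M i i = 1)
    (ho : ∀ i j, i ≠ j → M i j ≠ 0 → b i < b j) : M.det = 1 := by
  rw [Matrix.det_apply']
  rw [Finset.sum_eq_single (1 : Equiv.Perm ι)]
  · simp [hd]
  · intro σ _ hσ
    have hzero : ∏ i, M (σ i) i = 0 := by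
      by_contra hne
      have hfac : ∀ i, M (σ i) i ≠ 0 := fun i h0 =>
        hne (Finset.prod_eq_zero (Finset.mem_univ i) h0)
      have hle : ∀ i, b (σ i) ≤ b i := by
        intro i
        by_cases hi : σ i = i
        · rw [hi]
        · exact le_of_lt (ho _ _ hi (hfac i))
      obtain ⟨i₀, hi₀⟩ : ∃ i, σ i ≠ i := by
        by_contra hc; push_neg at hc; exact hσ (Equiv.ext hc)
      have hlt : ∑ i, b (σ i) < ∑ i, b i :=
        Finset.sum_lt_sum (fun i _ => hle i)
          ⟨i₀, Finset.mem_univ _, ho _ _ hi₀ (hfac i₀)⟩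
      rw [Equiv.sum_comp σ b] at hlt
      exact lt_irrefl _ hlt
    rw [hzero, mul_zero]
  · intro h; exact absurd (Finset.mem_univ _) h

lemma transvection_apply (i j a y : Fin n) (c : ℝ) :
    Matrix.transvection i j c a y
      = (if a = y then (1:ℝ) else 0) + (if i = a ∧ j = y then c else 0) := by
  simp [Matrix.transvection, Matrix.single_apply, Matrix.one_apply]

lemma det_cmp_transvection {i j : Fin n} (hij : i ≠ j) (c : ℝ) :
    (cmp (p := p) (Matrix.transvection i j c)).det = 1 := by
  classical
  set T := Matrix.transvection i j c with hT
  apply det_eq_one_of_increasing _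
    (fun s : WedgeIdx n p => (if (i : ℕ) < (j : ℕ) then 1 else -1) * ∑ a ∈ s.1, ((a : ℕ) : ℤ))
  · intro s
    rw [cmp_apply]
    by_cases hi : i ∈ s.1
    · by_cases hj : j ∈ s.1
      · set a₀ := (s.1.orderIsoOfFin s.2).symm ⟨i, hi⟩ with ha₀
        set b₀ := (s.1.orderIsoOfFin s.2).symm ⟨j, hj⟩ with hb₀
        have ha : embOf s a₀ = i := by simp [embOf, ha₀]
        have hb : embOf s b₀ = j := by simp [embOf, hb₀]
        have heq : T.submatrix (embOf s) (embOf s) = Matrix.transvection a₀ b₀ c := by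
          ext a b
          rw [Matrix.submatrix_apply, hT, transvection_apply, transvection_apply]
          have e1 : (embOf s a = embOf s b) = (a = b) :=
            propext ⟨fun h => embOf_injective s h, fun h => h ▸ rfl⟩
          have e2 : (i = embOf s a) = (a₀ = a) :=
            propext ⟨fun h => embOf_injective s (by rw [ha, ← h]),
              fun h => by rw [← h, ha]⟩
          have e3 : (j = embOf s b) = (b₀ = b) :=
            propext ⟨fun h => embOf_injective s (by rw [hb, ← h]),
              fun h => by rw [← h, hb]⟩
          simp only [e1, e2, e3]
        rw [heq, Matrix.det_transvection_of_ne _ _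
          (fun h => hij (by rw [← ha, ← hb, h])) c]
      · have heq : T.submatrix (embOf s) (embOf s) = 1 := by
          ext a b
          rw [Matrix.submatrix_apply, hT, transvection_apply]
          have h2 : ¬(i = embOf s a ∧ j = embOf s b) :=
            fun h => hj (h.2 ▸ embOf_mem s b)
          rw [if_neg h2, add_zero, Matrix.one_apply]
          have e1 : (embOf s a = embOf s b) = (a = b) :=
            propext ⟨fun h => embOf_injective s h, fun h => h ▸ rfl⟩
          simp only [e1]
        rw [heq, Matrix.det_one]
    · have heq : T.submatrix (embOf s) (embOf s) = 1 := by
        ext a b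
        rw [Matrix.submatrix_apply, hT, transvection_apply]
        have h2 : ¬(i = embOf s a ∧ j = embOf s b) :=
          fun h => hi (h.1 ▸ embOf_mem s a)
        rw [if_neg h2, add_zero, Matrix.one_apply]
        have e1 : (embOf s a = embOf s b) = (a = b) :=
          propext ⟨fun h => embOf_injective s h, fun h => h ▸ rfl⟩
        simp only [e1]
      rw [heq, Matrix.det_one]
  · intro s t hst hne
    have hrow : ∀ a, a ∈ s.1 → a ∉ t.1 → a = i := by
      intro a has hat
      by_contra hai
      apply hne
      rw [cmp_apply]
      apply det_submatrix_eq_zero_row has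
      intro y hy
      rw [hT, transvection_apply, if_neg (fun h : a = y => hat (h ▸ hy)),
        if_neg (fun h : i = a ∧ j = y => hai h.1.symm), add_zero]
    have hcol : ∀ b', b' ∈ t.1 → b' ∉ s.1 → b' = j := by
      intro b' hbt hbs
      by_contra hbj
      apply hne
      rw [cmp_apply]
      apply det_submatrix_eq_zero_col hbt
      intro x hx
      rw [hT, transvection_apply, if_neg (fun h : x = b' => hbs (h ▸ hx)),
        if_neg (fun h : i = x ∧ j = b' => hbj h.2.symm), add_zero]
    obtain ⟨a, has, hat⟩ := exists_mem_not_mem hst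
    obtain ⟨b', hbt, hbs⟩ := exists_mem_not_mem (Ne.symm hst)
    have hai := hrow a has hat
    have hbj := hcol b' hbt hbs
    subst hai hbj
    have hsd : s.1 \ t.1 = {a} := by
      apply Finset.eq_singleton_iff_unique_mem.mpr
      refine ⟨Finset.mem_sdiff.mpr ⟨has, hat⟩, ?_⟩
      intro x hx
      obtain ⟨hx1, hx2⟩ := Finset.mem_sdiff.mp hx
      exact hrow x hx1 hx2
    have htd : t.1 \ s.1 = {b'} := by
      apply Finset.eq_singleton_iff_unique_mem.mpr
      refine ⟨Finset.mem_sdiff.mpr ⟨hbt, hbs⟩, ?_⟩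
      intro x hx
      obtain ⟨hx1, hx2⟩ := Finset.mem_sdiff.mp hx
      exact hcol x hx1 hx2
    have hs1 : (∑ x ∈ s.1, ((x : ℕ) : ℤ))
        = ((a : ℕ) : ℤ) + ∑ x ∈ s.1 ∩ t.1, ((x : ℕ) : ℤ) := by
      rw [← Finset.sum_sdiff (Finset.inter_subset_left (s₂ := t.1)),
        Finset.sdiff_inter_self_left, hsd, Finset.sum_singleton]
    have ht1 : (∑ x ∈ t.1, ((x : ℕ) : ℤ))
        = ((b' : ℕ) : ℤ) + ∑ x ∈ s.1 ∩ t.1, ((x : ℕ) : ℤ) := by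
      rw [← Finset.sum_sdiff (Finset.inter_subset_left (s₂ := s.1)),
        Finset.sdiff_inter_self_left, htd, Finset.sum_singleton, Finset.inter_comm]
    have hab : (a : ℕ) ≠ (b' : ℕ) := fun h => hij (Fin.ext h)
    by_cases hlt : (a : ℕ) < (b' : ℕ)
    · rw [if_pos hlt, one_mul, one_mul, hs1, ht1]
      have : ((a:ℕ):ℤ) < ((b':ℕ):ℤ) := by exact_mod_cast hlt
      linarith
    · have hgt : (b' : ℕ) < (a : ℕ) := lt_of_le_of_ne (not_lt.mp hlt) (Ne.symm hab)
      rw [if_neg hlt, neg_one_mul, neg_one_mul, hs1, ht1]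
      have : ((b':ℕ):ℤ) < ((a:ℕ):ℤ) := by exact_mod_cast hgt
      linarith

lemma cmp_list_prod (L : List (Matrix (Fin n) (Fin n) ℝ)) :
    cmp (p := p) L.prod = (L.map (cmp (p := p))).prod := by
  induction L with
  | nil => simpa using cmp_one
  | cons A L ih => simp [List.prod_cons, cmp_mul, ih]

lemma card_filter_mem (hp : 1 ≤ p) (i : Fin n) :
    (Finset.univ.filter (fun s : WedgeIdx n p => i ∈ s.1)).card
      = (n - 1).choose (p - 1) := by
  classical
  have hkey : (Finset.univ.filter (fun s : WedgeIdx n p => i ∈ s.1)).card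
      = (Finset.powersetCard (p - 1) (Finset.univ.erase i)).card := by
    apply Finset.card_bij (i := fun s _ => s.1.erase i)
    · intro s hs
      rw [Finset.mem_filter] at hs
      rw [Finset.mem_powersetCard]
      exact ⟨Finset.erase_subset_erase i (Finset.subset_univ _),
        by rw [Finset.card_erase_of_mem hs.2, s.2]⟩
    · intro s hs s' hs' h
      rw [Finset.mem_filter] at hs hs'
      apply Subtype.ext
      rw [← Finset.insert_erase hs.2, ← Finset.insert_erase hs'.2, h]
    · intro B hB
      rw [Finset.mem_powersetCard] at hB
      have hiB : i ∉ B := fun h => (Finset.mem_erase.mp (hB.1 h)).1 rfl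
      have hcard : (insert i B).card = p := by
        rw [Finset.card_insert_of_notMem hiB, hB.2]
        omega
      refine ⟨⟨insert i B, hcard⟩, ?_, ?_⟩
      · rw [Finset.mem_filter]
        exact ⟨Finset.mem_univ _, Finset.mem_insert_self _ _⟩
      · exact Finset.erase_insert hiB
  rw [hkey, Finset.card_powersetCard, Finset.card_erase_of_mem (Finset.mem_univ i),
    Finset.card_univ, Fintype.card_fin]

theorem det_cmp_eq (hp : 1 ≤ p) (T : Matrix (Fin n) (Fin n) ℝ) :
    (cmp (p := p) T).det = T.det ^ ((n - 1).choose (p - 1)) := by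
  obtain ⟨L, L', D, hLL⟩ :=
    Matrix.Pivot.exists_list_transvec_mul_mul_list_transvec_eq_diagonal T
  have h1 : cmp (p := p) ((L.map Matrix.TransvectionStruct.toMatrix).prod * T *
      (L'.map Matrix.TransvectionStruct.toMatrix).prod) = cmp (Matrix.diagonal D) := by
    rw [hLL]
  rw [cmp_mul, cmp_mul, cmp_diagonal] at h1
  have h2 := congrArg Matrix.det h1
  rw [Matrix.det_mul, Matrix.det_mul, Matrix.det_diagonal] at h2
  have hdet1 : ∀ L'' : List (Matrix.TransvectionStruct (Fin n) ℝ),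
      (cmp (p := p) (L''.map Matrix.TransvectionStruct.toMatrix).prod).det = 1 := by
    intro L''
    rw [cmp_list_prod]
    have hgen : ∀ l : List (Matrix (WedgeIdx n p) (WedgeIdx n p) ℝ),
        (∀ A ∈ l, A.det = 1) → l.prod.det = 1 := by
      intro l
      induction l with
      | nil => intro _; simp
      | cons A l ih =>
        intro h
        rw [List.prod_cons, Matrix.det_mul, h A List.mem_cons_self,
          ih (fun B hB => h B (List.mem_cons_of_mem _ hB)), one_mul]
    apply hgen
    intro A hA
    simp only [List.map_map, List.mem_map] at hA
    obtain ⟨t, _, rfl⟩ := hA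
    exact det_cmp_transvection t.hij t.c
  rw [hdet1 L, hdet1 L', one_mul, mul_one] at h2
  have h3 := congrArg Matrix.det hLL
  rw [Matrix.det_mul, Matrix.det_mul, Matrix.det_diagonal,
    Matrix.TransvectionStruct.det_toMatrix_prod,
    Matrix.TransvectionStruct.det_toMatrix_prod, one_mul, mul_one] at h3
  rw [h2, h3]
  -- now: ∏ s, ∏ a ∈ s.1, D a = (∏ a, D a) ^ ((n-1).choose (p-1))
  have h4 : ∀ s : WedgeIdx n p, (∏ a ∈ s.1, D a)
      = ∏ a : Fin n, (if a ∈ s.1 then D a else 1) := by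
    intro s
    rw [← Finset.prod_filter]
    congr 1
    ext a; simp
  simp only [h4]
  rw [Finset.prod_comm]
  have h5 : ∀ a : Fin n, (∏ s : WedgeIdx n p, if a ∈ s.1 then D a else 1)
      = D a ^ ((n - 1).choose (p - 1)) := by
    intro a
    rw [← Finset.prod_filter, Finset.prod_const, card_filter_mem hp]
  simp only [h5]
  rw [← Finset.prod_pow]

lemma wedge_mulVec (T : Matrix (Fin n) (Fin n) ℝ) (v : Fin p → Fin n → ℝ) :
    wedge n p (fun i => T.mulVec (v i)) = (cmp T).mulVec (wedge n p v) := by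
  funext s
  have h1 : (Matrix.of fun i j => T.mulVec (v i) (embOf s j) : Matrix (Fin p) (Fin p) ℝ)
      = (Matrix.of fun i k => v i k : Matrix (Fin p) (Fin n) ℝ) * (T.transpose.submatrix id (embOf s)) := by
    ext a b
    simp [Matrix.mul_apply, Matrix.mulVec, dotProduct, mul_comm]
  show (Matrix.of fun i j => T.mulVec (v i) (embOf s j)).det = _
  rw [h1, cauchy_binet]
  show _ = ∑ t, cmp T s t * wedge n p v t
  apply Finset.sum_congr rfl
  intro t _
  rw [Matrix.submatrix_submatrix]
  have h2 : T.transpose.submatrix (id ∘ embOf t) (embOf s ∘ id)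
      = (T.submatrix (embOf s) (embOf t)).transpose := by
    ext a b; simp [Matrix.transpose_apply]
  rw [h2, Matrix.det_transpose, cmp_apply, mul_comm]
  rfl

lemma compoundBody_image (T : Matrix (Fin n) (Fin n) ℝ) (C : Set (Fin n → ℝ)) :
    compoundBody n p (T.mulVec '' C) = (cmp (p := p) T).mulVec '' compoundBody n p C := by
  unfold compoundBody
  have himg := (Matrix.mulVecLin (cmp (p := p) T)).image_convexHull
    {w : WedgeIdx n p → ℝ | ∃ v : Fin p → Fin n → ℝ, (∀ i, v i ∈ C) ∧ w = wedge n p v}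
  have hcoe : ⇑(Matrix.mulVecLin (cmp (p := p) T)) = (cmp (p := p) T).mulVec := by
    funext x; exact Matrix.mulVecLin_apply _ _
  rw [hcoe] at himg
  have hset : {w : WedgeIdx n p → ℝ | ∃ v : Fin p → Fin n → ℝ,
        (∀ i, v i ∈ T.mulVec '' C) ∧ w = wedge n p v}
      = (cmp (p := p) T).mulVec ''
        {w : WedgeIdx n p → ℝ | ∃ v : Fin p → Fin n → ℝ, (∀ i, v i ∈ C) ∧ w = wedge n p v} := by
    ext w
    constructor
    · rintro ⟨v, hv, rfl⟩
      choose u hu huv using hv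
      refine ⟨wedge n p u, ⟨u, hu, rfl⟩, ?_⟩
      rw [← wedge_mulVec, show (fun i => T.mulVec (u i)) = v from funext huv]
    · rintro ⟨w', ⟨u, hu, rfl⟩, rfl⟩
      exact ⟨fun i => T.mulVec (u i), fun i => ⟨u i, hu i, rfl⟩, (wedge_mulVec T u).symm⟩
  rw [hset, ← himg]

lemma volume_mulVec_image {ι : Type*} [Fintype ι] [DecidableEq ι]
    (M : Matrix ι ι ℝ) (S : Set (ι → ℝ)) :
    volume (M.mulVec '' S) = ENNReal.ofReal |M.det| * volume S := by
  have h := MeasureTheory.Measure.addHaar_image_linearMap (μ := volume)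
    (Matrix.toLin' M) S
  have hcoe : ⇑(Matrix.toLin' M) = M.mulVec := by
    funext x; exact Matrix.toLin'_apply _ _
  rw [hcoe] at h
  rw [h, LinearMap.det_toLin']

lemma cube_subset_convexHull {ι : Type*} [Fintype ι] [DecidableEq ι] [Nonempty ι]
    {A : Set (ι → ℝ)} (hA : ∀ i : ι, Pi.single i (1:ℝ) ∈ A ∧ -Pi.single i (1:ℝ) ∈ A)
    {x : ι → ℝ} (hx : ∀ i, |x i| ≤ 1 / Fintype.card ι) : x ∈ convexHull ℝ A := by
  classical
  set N := Fintype.card ι with hN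
  have hN0 : 0 < (N : ℝ) := by exact_mod_cast Fintype.card_pos
  set r : ℝ := 1 - ∑ i, |x i| with hr
  have hr0 : 0 ≤ r := by
    have h1 : ∑ i, |x i| ≤ ∑ _i : ι, (1/N : ℝ) := Finset.sum_le_sum (fun i _ => hx i)
    rw [Finset.sum_const, Finset.card_univ, nsmul_eq_mul, ← hN] at h1
    have h2 : (N : ℝ) * (1 / N) = 1 := by field_simp
    rw [h2] at h1
    simp only [hr]
    linarith
  set w : ι × Bool → ℝ := fun q =>
    (if q.2 then max (x q.1) 0 else max (-(x q.1)) 0) + r/(2*N) with hw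
  set z : ι × Bool → ι → ℝ := fun q =>
    if q.2 then Pi.single q.1 1 else -Pi.single q.1 1 with hz
  have hw0 : ∀ q, 0 ≤ w q := by
    intro q
    have h3 : (0:ℝ) ≤ r/(2*N) := by positivity
    have h4 : (0:ℝ) ≤ (if q.2 then max (x q.1) 0 else max (-(x q.1)) 0) := by
      rcases q.2 <;> simp [le_max_iff]
    simp only [hw]
    linarith
  have habs : ∀ a : ℝ, max a 0 + max (-a) 0 = |a| := by
    intro a
    rcases le_or_gt 0 a with h | h
    · rw [max_eq_left h, max_eq_right (by linarith), add_zero, abs_of_nonneg h]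
    · rw [max_eq_right h.le, max_eq_left (by linarith), zero_add, abs_of_neg h]
  have hsub : ∀ a : ℝ, max a 0 - max (-a) 0 = a := by
    intro a
    rcases le_or_gt 0 a with h | h
    · rw [max_eq_left h, max_eq_right (by linarith)]; ring
    · rw [max_eq_right h.le, max_eq_left (by linarith)]; ring
  have hsum : ∑ q, w q = 1 := by
    rw [Fintype.sum_prod_type]
    have h1 : ∀ i : ι, ∑ b : Bool, w (i, b) = |x i| + r/N := by
      intro i
      rw [Fintype.sum_bool]
      simp only [hw]
      norm_num
      rw [← habs (x i)]
      have h5 : r/(2*(N:ℝ)) + r/(2*N) = r/N := by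
        field_simp
        ring
      linarith
    simp only [h1]
    rw [Finset.sum_add_distrib, Finset.sum_const, Finset.card_univ, ← hN, nsmul_eq_mul]
    have h2 : (N:ℝ) * (r/N) = r := by field_simp
    rw [h2, hr]
    ring
  have hxz : ∑ q, w q • z q = x := by
    rw [Fintype.sum_prod_type]
    have h1 : ∀ i : ι, ∑ b : Bool, w (i, b) • z (i, b) = x i • (Pi.single i 1 : ι → ℝ) := by
      intro i
      rw [Fintype.sum_bool]
      simp only [hw, hz]
      norm_num
      rw [← sub_eq_add_neg, ← sub_smul]
      congr 1
      have h6 := hsub (x i)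
      linarith
    simp only [h1]
    funext j
    rw [Finset.sum_apply]
    rw [Finset.sum_eq_single j]
    · simp
    · intro i _ hij
      simp [Pi.single_eq_of_ne (Ne.symm hij)]
    · intro h
      exact absurd (Finset.mem_univ _) h
  have hmem := Finset.centerMass_mem_convexHull (t := Finset.univ) (w := w) (z := z)
    (fun q _ => hw0 q) (by rw [hsum]; norm_num) (fun q _ => by
      rcases q with ⟨i, b⟩
      cases b
      · exact (hA i).2
      · exact (hA i).1)
  rwa [Finset.centerMass_eq_of_sum_1 _ _ hsum, hxz] at hmem

lemma abs_det_le_factorial {M : Matrix (Fin p) (Fin p) ℝ} (h : ∀ i j, |M i j| ≤ 1) :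
    |M.det| ≤ (p.factorial : ℝ) := by
  rw [Matrix.det_apply']
  refine le_trans (Finset.abs_sum_le_sum_abs _ _) ?_
  have h1 : ∀ σ : Equiv.Perm (Fin p),
      |((Equiv.Perm.sign σ : ℤ) : ℝ) * ∏ i, M (σ i) i| ≤ 1 := by
    intro σ
    rw [abs_mul]
    have h2 : |((Equiv.Perm.sign σ : ℤ) : ℝ)| = 1 := by
      rcases Int.units_eq_one_or (Equiv.Perm.sign σ) with hs | hs <;> rw [hs] <;> norm_num
    rw [h2, one_mul, Finset.abs_prod]
    exact Finset.prod_le_one (fun i _ => abs_nonneg _) (fun i _ => h _ _)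
  refine le_trans (Finset.sum_le_sum (fun σ _ => h1 σ)) ?_
  rw [Finset.sum_const, Finset.card_univ, nsmul_eq_mul, mul_one]
  rw [Fintype.card_perm, Fintype.card_fin]

lemma wedge_single (s : WedgeIdx n p) :
    wedge n p (fun i => (Pi.single (embOf s i) 1 : Fin n → ℝ))
      = (Pi.single s 1 : WedgeIdx n p → ℝ) := by
  funext t
  show (Matrix.of fun i j => (Pi.single (embOf s i) 1 : Fin n → ℝ) (embOf t j)).det
      = (Pi.single s 1 : WedgeIdx n p → ℝ) t
  by_cases h : t = s
  · subst h
    have h1 : (Matrix.of fun i j => (Pi.single (embOf t i) 1 : Fin n → ℝ) (embOf t j))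
        = (1 : Matrix (Fin p) (Fin p) ℝ) := by
      ext a b
      rw [Matrix.of_apply, Pi.single_apply, Matrix.one_apply]
      by_cases hab : a = b
      · subst hab; simp
      · rw [if_neg hab, if_neg (fun hc => hab (embOf_injective t hc).symm)]
    rw [h1, Matrix.det_one, Pi.single_eq_same]
  · rw [Pi.single_eq_of_ne h 1]
    obtain ⟨a, has, hat⟩ := exists_mem_not_mem (fun hc : s = t => h hc.symm)
    apply Matrix.det_eq_zero_of_row_eq_zero ((s.1.orderIsoOfFin s.2).symm ⟨a, has⟩)
    intro j
    rw [Matrix.of_apply]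
    have he : embOf s ((s.1.orderIsoOfFin s.2).symm ⟨a, has⟩) = a := by simp [embOf]
    rw [he, Pi.single_eq_of_ne
      (fun hc : embOf t j = a => hat (by rw [← hc]; exact embOf_mem t j))]

lemma wedge_neg_single (hp0 : 0 < p) (s : WedgeIdx n p) :
    wedge n p (fun i => (if i = ⟨0, hp0⟩ then (-1:ℝ) else 1) •
        (Pi.single (embOf s i) 1 : Fin n → ℝ))
      = -(Pi.single s 1 : WedgeIdx n p → ℝ) := by
  funext t
  show (Matrix.of fun i j => ((if i = ⟨0, hp0⟩ then (-1:ℝ) else 1) •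
      (Pi.single (embOf s i) 1 : Fin n → ℝ)) (embOf t j)).det
      = (-(Pi.single s 1 : WedgeIdx n p → ℝ)) t
  have h0 : (Matrix.of fun i j => ((if i = ⟨0, hp0⟩ then (-1:ℝ) else 1) •
      (Pi.single (embOf s i) 1 : Fin n → ℝ)) (embOf t j))
      = Matrix.of (fun i j => (if i = ⟨0, hp0⟩ then (-1:ℝ) else 1) *
        (Matrix.of fun i j => (Pi.single (embOf s i) 1 : Fin n → ℝ) (embOf t j)) i j) := rfl
  rw [h0, Matrix.det_mul_column]
  have hprod : (∏ i : Fin p, (if i = ⟨0, hp0⟩ then (-1:ℝ) else 1)) = -1 := by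
    rw [Finset.prod_ite_eq' Finset.univ (⟨0, hp0⟩ : Fin p) (fun _ => (-1:ℝ))]
    simp
  rw [hprod,
    show (Matrix.of fun i j => (Pi.single (embOf s i) 1 : Fin n → ℝ) (embOf t j)).det
      = (Pi.single s 1 : WedgeIdx n p → ℝ) t from congrFun (wedge_single s) t]
  simp

lemma single_mem_gens {S : Set (Fin n → ℝ)}
    (hS : ∀ i : Fin n, (Pi.single i 1 : Fin n → ℝ) ∈ S ∧ -(Pi.single i 1 : Fin n → ℝ) ∈ S)
    (hp0 : 0 < p) (s : WedgeIdx n p) :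
    (Pi.single s 1 : WedgeIdx n p → ℝ) ∈ {w : WedgeIdx n p → ℝ | ∃ v : Fin p → Fin n → ℝ,
        (∀ i, v i ∈ S) ∧ w = wedge n p v} ∧
    -(Pi.single s 1 : WedgeIdx n p → ℝ) ∈ {w : WedgeIdx n p → ℝ | ∃ v : Fin p → Fin n → ℝ,
        (∀ i, v i ∈ S) ∧ w = wedge n p v} := by
  constructor
  · exact ⟨fun i => (Pi.single (embOf s i) 1 : Fin n → ℝ), fun i => (hS _).1,
      (wedge_single s).symm⟩
  · refine ⟨fun i => (if i = ⟨0, hp0⟩ then (-1:ℝ) else 1) •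
        (Pi.single (embOf s i) 1 : Fin n → ℝ), fun i => ?_, (wedge_neg_single hp0 s).symm⟩
    show ((if i = ⟨0, hp0⟩ then (-1:ℝ) else 1) • (Pi.single (embOf s i) 1 : Fin n → ℝ)) ∈ S
    by_cases hi : i = ⟨0, hp0⟩
    · rw [if_pos hi, neg_one_smul]
      exact (hS _).2
    · rw [if_neg hi, one_smul]
      exact (hS _).1

lemma volume_cube {ι : Type*} [Fintype ι] (a : ℝ) :
    volume (Set.pi Set.univ fun _ : ι => Set.Icc (-a) a)
      = (ENNReal.ofReal (2*a))^(Fintype.card ι) := by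
  have h : ∀ _i : ι, volume (Set.Icc (-a) a) = ENNReal.ofReal (2*a) := by
    intro _
    rw [Real.volume_Icc]
    congr 1
    ring
  rw [MeasureTheory.volume_pi_pi]
  rw [Finset.prod_congr rfl (fun i _ => h i), Finset.prod_const, Finset.card_univ]

end Mahler

open Mahler

/-- Mahler's compound volume estimate: there are constants
`c₁(n,p), c₂(n,p) > 0` with `c₁ ≤ V(C_p)·V(C)^{-P} ≤ c₂`, `P = C(n-1,p-1)`,
for every symmetric convex body `C` in `ℝⁿ`. -/
theorem mahler_compound_volume_estimate
    (n p : ℕ) (hp : 1 ≤ p) (hpn : p ≤ n - 1) :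
    ∃ c₁ c₂ : ℝ, 0 < c₁ ∧ 0 < c₂ ∧
      ∀ C : Set (Fin n → ℝ),
        IsCompact C → Convex ℝ C → C = -C → (0 : Fin n → ℝ) ∈ interior C →
        c₁ * (volume C).toReal ^ (Nat.choose (n - 1) (p - 1)) ≤
            (volume (compoundBody n p C)).toReal ∧
        (volume (compoundBody n p C)).toReal ≤
            c₂ * (volume C).toReal ^ (Nat.choose (n - 1) (p - 1)) := by
  classical
  have hn2 : 2 ≤ n := by omega
  have hp0 : 0 < p := hp
  have hpn' : p ≤ n := by omega
  haveI : Nonempty (Fin n) := ⟨⟨0, by omega⟩⟩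
  obtain ⟨s₀, _, hs₀card⟩ :=
    Finset.exists_subset_card_eq (s := (Finset.univ : Finset (Fin n))) (n := p)
      (by rw [Finset.card_univ, Fintype.card_fin]; exact hpn')
  haveI hne : Nonempty (WedgeIdx n p) := ⟨⟨s₀, hs₀card⟩⟩
  set N := Fintype.card (WedgeIdx n p) with hN
  have hN0 : 0 < N := Fintype.card_pos
  set P := Nat.choose (n - 1) (p - 1) with hP
  set κ₁ : ℝ := (2 / N)^N with hκ₁
  set κ₂ : ℝ := (2 * p.factorial)^N with hκ₂
  set α₁ : ℝ := (2 / n)^n with hα₁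
  set α₂ : ℝ := (2:ℝ)^n with hα₂
  have hn0R : (0:ℝ) < n := by positivity
  have hN0R : (0:ℝ) < N := by exact_mod_cast hN0
  have hκ₁0 : 0 < κ₁ := by rw [hκ₁]; positivity
  have hκ₂0 : 0 < κ₂ := by
    rw [hκ₂]
    have : (0:ℝ) < p.factorial := by exact_mod_cast p.factorial_pos
    positivity
  have hα₁0 : 0 < α₁ := by rw [hα₁]; positivity
  have hα₂0 : 0 < α₂ := by rw [hα₂]; positivity
  refine ⟨κ₁ / α₂^P, κ₂ / α₁^P, by positivity, by positivity, ?_⟩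
  intro C hC hconv hsym h0
  -- continuity of the determinant objective
  have hdetcont : Continuous fun v : Fin n → Fin n → ℝ => (Matrix.of fun k l => v l k).det := by
    have heq : (fun v : Fin n → Fin n → ℝ => (Matrix.of fun k l => v l k).det)
        = fun v => ∑ σ : Equiv.Perm (Fin n),
            ((Equiv.Perm.sign σ : ℤ) : ℝ) * ∏ i, v (σ i) i :=
      funext fun v => det_row_expansion _
    rw [heq]
    exact continuous_finset_sum _ fun σ _ => continuous_const.mul
      (continuous_finset_prod _ fun i _ =>
        (continuous_apply i).comp (continuous_apply (σ i)))
  set K := Set.pi Set.univ (fun _ : Fin n => C) with hK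
  have hKc : IsCompact K := isCompact_univ_pi (fun _ => hC)
  have h0C : (0 : Fin n → ℝ) ∈ C := interior_subset h0
  have hKne : K.Nonempty := ⟨0, fun i _ => h0C⟩
  obtain ⟨b, hbK, hbmax⟩ := hKc.exists_isMaxOn hKne
    ((continuous_abs.comp hdetcont).continuousOn)
  set T := (Matrix.of fun k l => b l k : Matrix (Fin n) (Fin n) ℝ) with hT
  have hbC : ∀ i, b i ∈ C := fun i => hbK i (Set.mem_univ i)
  obtain ⟨ε, hε, hball⟩ : ∃ ε > 0, Metric.ball (0 : Fin n → ℝ) ε ⊆ C :=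
    Metric.mem_nhds_iff.mp (mem_interior_iff_mem_nhds.mp h0)
  set v₀ : Fin n → Fin n → ℝ := fun i => (ε/2) • (Pi.single i 1 : Fin n → ℝ) with hv₀
  have hv₀K : v₀ ∈ K := by
    intro i _
    apply hball
    rw [Metric.mem_ball, dist_zero_right, hv₀]
    rw [norm_smul, Pi.norm_single, Real.norm_eq_abs, norm_one, mul_one,
      abs_of_pos (by linarith)]
    linarith
  have hdetv₀ : |(Matrix.of fun k l => v₀ l k).det| = (ε/2)^n := by
    have hdiag : (Matrix.of fun k l => v₀ l k) = Matrix.diagonal (fun _ => ε/2) := by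
      ext k l
      rw [Matrix.of_apply, hv₀]
      by_cases hkl : k = l
      · subst hkl; simp
      · rw [Matrix.diagonal_apply_ne _ hkl]
        simp [Pi.single_eq_of_ne hkl]
    rw [hdiag, Matrix.det_diagonal, Finset.prod_const, Finset.card_univ, Fintype.card_fin,
      abs_of_pos (by positivity)]
  have hDpos : 0 < |T.det| := by
    have h1 : |(Matrix.of fun k l => v₀ l k).det| ≤ |T.det| := hbmax hv₀K
    rw [hdetv₀] at h1
    have : (0:ℝ) < (ε/2)^n := by positivity
    linarith
  have hTdet : T.det ≠ 0 := fun h => by rw [h] at hDpos; simp at hDpos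
  have hTunit : IsUnit T.det := isUnit_iff_ne_zero.mpr hTdet
  set S := (T⁻¹).mulVec '' C with hSdef
  have hTinv : ∀ x : Fin n → ℝ, T.mulVec ((T⁻¹).mulVec x) = x := by
    intro x
    rw [Matrix.mulVec_mulVec, Matrix.mul_nonsing_inv _ hTunit, Matrix.one_mulVec]
  have hTinv' : ∀ x : Fin n → ℝ, (T⁻¹).mulVec (T.mulVec x) = x := by
    intro x
    rw [Matrix.mulVec_mulVec, Matrix.nonsing_inv_mul _ hTunit, Matrix.one_mulVec]
  have hCS : T.mulVec '' S = C := by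
    ext y
    constructor
    · rintro ⟨x, ⟨c, hc, rfl⟩, rfl⟩
      rw [hTinv]
      exact hc
    · intro hy
      exact ⟨(T⁻¹).mulVec y, ⟨y, hy, rfl⟩, hTinv y⟩
  have hS1 : ∀ x ∈ S, ∀ k, |x k| ≤ 1 := by
    rintro x ⟨c, hc, rfl⟩ k
    have hcr : Matrix.cramer T c = T.det • (T⁻¹).mulVec c := by
      have h1 : T.mulVec (Matrix.cramer T c) = T.det • c := Matrix.mulVec_cramer T c
      have h2 := congrArg ((T⁻¹).mulVec) h1
      rw [hTinv', Matrix.mulVec_smul] at h2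
      exact h2
    have hk := congrFun hcr k
    rw [Matrix.cramer_apply] at hk
    have hupdate : Matrix.updateCol T k c = Matrix.of fun a l => (Function.update b k c) l a := by
      ext a l
      rw [Matrix.updateCol_apply, Matrix.of_apply]
      by_cases hl : l = k
      · rw [if_pos hl, hl, Function.update_self]
      · rw [if_neg hl, Function.update_of_ne hl, hT]
        rfl
    have hmem : (Function.update b k c) ∈ K := by
      intro i _
      by_cases hik : i = k
      · rw [hik, Function.update_self]
        exact hc
      · rw [Function.update_of_ne hik]
        exact hbC i
    have hle : |(Matrix.updateCol T k c).det| ≤ |T.det| := by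
      rw [hupdate]
      exact hbmax hmem
    rw [hk] at hle
    have hle2 : |T.det| * |((T⁻¹).mulVec c) k| ≤ |T.det| * 1 := by
      rw [mul_one, ← abs_mul]
      simpa using hle
    exact le_of_mul_le_mul_left hle2 hDpos
  have hTe : ∀ i : Fin n, T.mulVec (Pi.single i 1 : Fin n → ℝ) = b i := by
    intro i
    rw [Matrix.mulVec_single_one]
    funext k
    rw [hT]
    rfl
  have hSe : ∀ i : Fin n, (Pi.single i 1 : Fin n → ℝ) ∈ S ∧
      -(Pi.single i 1 : Fin n → ℝ) ∈ S := by
    intro i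
    constructor
    · exact ⟨b i, hbC i, by rw [← hTe i, hTinv']⟩
    · have hbneg : -b i ∈ C := by
        rw [hsym, Set.mem_neg, neg_neg]
        exact hbC i
      refine ⟨-b i, hbneg, ?_⟩
      rw [Matrix.mulVec_neg, ← hTe i, hTinv']
  have hSconv : Convex ℝ S := by
    have h1 := hconv.linear_image (Matrix.mulVecLin T⁻¹)
    rwa [show ⇑(Matrix.mulVecLin T⁻¹) = (T⁻¹).mulVec from
      funext fun x => Matrix.mulVecLin_apply _ _] at h1
  have hvolC : volume C = ENNReal.ofReal |T.det| * volume S := by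
    rw [← hCS, volume_mulVec_image]
  have hvolCp : volume (compoundBody n p C)
      = (ENNReal.ofReal |T.det|)^P * volume (compoundBody n p S) := by
    rw [← hCS, compoundBody_image, volume_mulVec_image, det_cmp_eq hp, abs_pow,
      ENNReal.ofReal_pow (abs_nonneg _)]
  -- box inclusions
  have hbox1 : Set.pi Set.univ (fun _ : Fin n => Set.Icc (-(1/(n:ℝ))) (1/(n:ℝ))) ⊆ S := by
    intro x hx
    have h1 := cube_subset_convexHull (A := S) hSe (x := x) ?_
    · rwa [hSconv.convexHull_eq] at h1
    · intro i
      have h2 := hx i (Set.mem_univ i)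
      rw [Set.mem_Icc] at h2
      rw [Fintype.card_fin]
      exact abs_le.mpr h2
  have hbox2 : S ⊆ Set.pi Set.univ (fun _ : Fin n => Set.Icc (-1 : ℝ) 1) := by
    intro x hx i _
    rw [Set.mem_Icc, ← abs_le]
    exact hS1 x hx i
  have hboxK : Set.pi Set.univ (fun _ : WedgeIdx n p => Set.Icc (-(1/(N:ℝ))) (1/(N:ℝ)))
      ⊆ compoundBody n p S := by
    intro x hx
    apply cube_subset_convexHull (fun s => single_mem_gens hSe hp0 s)
    intro s
    have h2 := hx s (Set.mem_univ s)
    rw [Set.mem_Icc] at h2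
    rw [← hN]
    exact abs_le.mpr h2
  have hboxKp : compoundBody n p S ⊆
      Set.pi Set.univ (fun _ : WedgeIdx n p => Set.Icc (-(p.factorial:ℝ)) (p.factorial:ℝ)) := by
    apply convexHull_min
    · rintro w ⟨v, hv, rfl⟩ s _
      rw [Set.mem_Icc, ← abs_le]
      apply abs_det_le_factorial
      intro i j
      exact hS1 _ (hv i) _
    · exact convex_pi (fun i _ => convex_Icc _ _)
  -- volume bounds
  have hvS_ub : volume S ≤ ENNReal.ofReal 2 ^ n := by
    calc volume S ≤ volume (Set.pi Set.univ (fun _ : Fin n => Set.Icc (-1 : ℝ) 1)) :=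
          measure_mono hbox2
      _ = (ENNReal.ofReal (2*1))^(Fintype.card (Fin n)) := volume_cube 1
      _ = ENNReal.ofReal 2 ^ n := by rw [mul_one, Fintype.card_fin]
  have hvS_lb : ENNReal.ofReal (2*(1/(n:ℝ))) ^ n ≤ volume S := by
    calc ENNReal.ofReal (2*(1/(n:ℝ))) ^ n
        = volume (Set.pi Set.univ (fun _ : Fin n => Set.Icc (-(1/(n:ℝ))) (1/(n:ℝ)))) := by
          rw [volume_cube, Fintype.card_fin]
      _ ≤ volume S := measure_mono hbox1
  have hvK_lb : ENNReal.ofReal (2*(1/(N:ℝ))) ^ N ≤ volume (compoundBody n p S) := by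
    calc ENNReal.ofReal (2*(1/(N:ℝ))) ^ N
        = volume (Set.pi Set.univ
            (fun _ : WedgeIdx n p => Set.Icc (-(1/(N:ℝ))) (1/(N:ℝ)))) := by
          rw [volume_cube, hN]
      _ ≤ _ := measure_mono hboxK
  have hvK_ub : volume (compoundBody n p S) ≤ ENNReal.ofReal (2*(p.factorial:ℝ)) ^ N := by
    calc volume (compoundBody n p S) ≤ volume (Set.pi Set.univ
            (fun _ : WedgeIdx n p => Set.Icc (-(p.factorial:ℝ)) (p.factorial:ℝ)))  :=
          measure_mono hboxKp
      _ = _ := by rw [volume_cube, hN]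
  have hSfin : volume S ≠ ⊤ :=
    (lt_of_le_of_lt hvS_ub (ENNReal.pow_lt_top (n := n) ENNReal.ofReal_lt_top)).ne
  have hKfin : volume (compoundBody n p S) ≠ ⊤ :=
    (lt_of_le_of_lt hvK_ub (ENNReal.pow_lt_top (n := N) ENNReal.ofReal_lt_top)).ne
  -- real versions
  set a₁ := (volume S).toReal with ha₁
  set sc := (volume (compoundBody n p S)).toReal with hsc
  have ha₁ub : a₁ ≤ α₂ := by
    have h1 := ENNReal.toReal_mono (ENNReal.pow_lt_top (n := n) ENNReal.ofReal_lt_top).ne hvS_ub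
    rwa [ENNReal.toReal_pow, ENNReal.toReal_ofReal (by norm_num)] at h1
  have ha₁lb : α₁ ≤ a₁ := by
    have h1 := ENNReal.toReal_mono hSfin hvS_lb
    rwa [ENNReal.toReal_pow, ENNReal.toReal_ofReal (by positivity),
      show 2*(1/(n:ℝ)) = 2/n by ring] at h1
  have hscub : sc ≤ κ₂ := by
    have h1 := ENNReal.toReal_mono (ENNReal.pow_lt_top (n := N) ENNReal.ofReal_lt_top).ne hvK_ub
    rwa [ENNReal.toReal_pow, ENNReal.toReal_ofReal (by positivity)] at h1
  have hsclb : κ₁ ≤ sc := by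
    have h1 := ENNReal.toReal_mono hKfin hvK_lb
    rwa [ENNReal.toReal_pow, ENNReal.toReal_ofReal (by positivity),
      show 2*(1/(N:ℝ)) = 2/N by ring] at h1
  have ha₁0 : 0 < a₁ := lt_of_lt_of_le hα₁0 ha₁lb
  have hAeq : (volume C).toReal = |T.det| * a₁ := by
    rw [hvolC, ENNReal.toReal_mul, ENNReal.toReal_ofReal (abs_nonneg _)]
  have hApeq : (volume (compoundBody n p C)).toReal = |T.det|^P * sc := by
    rw [hvolCp, ENNReal.toReal_mul, ENNReal.toReal_pow, ENNReal.toReal_ofReal (abs_nonneg _)]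
  rw [hAeq, hApeq]
  constructor
  · rw [mul_pow]
    have h1 : κ₁ / α₂^P * (|T.det|^P * a₁^P) = |T.det|^P * (κ₁ * (a₁^P / α₂^P)) := by
      ring
    rw [h1]
    apply mul_le_mul_of_nonneg_left _ (by positivity)
    have h2 : a₁^P / α₂^P ≤ 1 := by
      rw [div_le_one (by positivity)]
      exact pow_le_pow_left₀ ha₁0.le ha₁ub P
    calc κ₁ * (a₁^P / α₂^P) ≤ κ₁ * 1 := by
          exact mul_le_mul_of_nonneg_left h2 hκ₁0.le
      _ = κ₁ := mul_one _
      _ ≤ sc := hsclb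
  · rw [mul_pow]
    have h1 : κ₂ / α₁^P * (|T.det|^P * a₁^P) = |T.det|^P * (κ₂ * (a₁^P / α₁^P)) := by
      ring
    rw [h1]
    apply mul_le_mul_of_nonneg_left _ (by positivity)
    have h2 : (1:ℝ) ≤ a₁^P / α₁^P := by
      rw [le_div_iff₀ (by positivity), one_mul]
      exact pow_le_pow_left₀ hα₁0.le ha₁lb P
    calc sc ≤ κ₂ := hscub
      _ = κ₂ * 1 := (mul_one _).symm
      _ ≤ κ₂ * (a₁^P / α₁^P) := mul_le_mul_of_nonneg_left h2 hκ₂0.le
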